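/- arXiv:1905.05484 — 4 statements merged into one kernel-verified Lean document; each statement's English description precedes it below -/
import Mathlib

section
/- Let X be a complete metric space, U ⊆ X an open set, ‖·‖ a norm on ℝ^k, ε > 0, and f : U → ℝ^k a continuous map. Suppose that for every x ∈ U and every v ∈ ℝ^k with f(x) ≠ v there exists y ∈ U with y ≠ x and ‖f(y) − v‖ − ‖f(x) − v‖ ≤ −ε·d(x, y). Then f is ε-open: for every x ∈ U and every v ∈ ℝ^k such that the closed ball of radius ε⁻¹‖f(x) − v‖ around x is contained in U, there exists y ∈ U with f(y) = v and ε·d(x, y) ≤ ‖f(x) − v‖. -/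
/-- An Ekeland-type variational principle adapted to our setting. -/
theorem ekeland_aux {X : Type*} [MetricSpace X] [CompleteSpace X]
    (g : X → ℝ) (hg0 : ∀ z, 0 ≤ g z) (ε : ℝ) (hε : 0 < ε)
    (U : Set X) (hU : IsOpen U) (hg : ContinuousOn g U)
    (x : X) (hx : x ∈ U) (hball : Metric.closedBall x (ε⁻¹ * g x) ⊆ U) :
    ∃ y ∈ U, g y + ε * dist x y ≤ g x ∧
      ∀ z, g z + ε * dist y z ≤ g y → z = y := by
  set r : X → X → Prop := fun z w => g w + ε * dist z w ≤ g z with hr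
  have hrefl : ∀ z, r z z := by
    intro z; simp [hr]
  have htrans : ∀ a b c, r a b → r b c → r a c := by
    intro a b c h1 h2
    have htri : dist a c ≤ dist a b + dist b c := dist_triangle a b c
    have : ε * dist a c ≤ ε * dist a b + ε * dist b c := by
      rw [← mul_add]; exact mul_le_mul_of_nonneg_left htri hε.le
    simp only [hr] at h1 h2 ⊢
    linarith
  have hrball : ∀ z, r x z → z ∈ Metric.closedBall x (ε⁻¹ * g x) := by
    intro z hz
    simp only [Metric.mem_closedBall, dist_comm z x]
    have h1 : ε * dist x z ≤ g x := by simp only [hr] at hz; linarith [hg0 z]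
    rw [le_inv_mul_iff₀ hε]
    exact h1
  -- the infimum of g over successors of z
  set m : X → ℝ := fun z => sInf (g '' {w | r z w}) with hm
  have hmne : ∀ z, (g '' {w | r z w}).Nonempty := fun z => ⟨g z, z, hrefl z, rfl⟩
  have hmbdd : ∀ z, BddBelow (g '' {w | r z w}) := by
    intro z; exact ⟨0, by rintro _ ⟨w, -, rfl⟩; exact hg0 w⟩
  have hm0 : ∀ z, 0 ≤ m z := fun z => le_csInf (hmne z) (by rintro _ ⟨w, -, rfl⟩; exact hg0 w)
  have hmle : ∀ z, m z ≤ g z := fun z => csInf_le (hmbdd z) ⟨z, hrefl z, rfl⟩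
  have hmmono : ∀ a b, r a b → m a ≤ m b := by
    intro a b hab
    apply csInf_le_csInf (hmbdd a) (hmne b)
    rintro _ ⟨w, hw, rfl⟩
    exact ⟨w, htrans a b w hab hw, rfl⟩
  -- choice of next point
  have hnext : ∀ z : X, ∃ w : X, r z w ∧ g w ≤ (m z + g z) / 2 := by
    intro z
    rcases lt_or_eq_of_le (hmle z) with h | h
    · have : m z < (m z + g z) / 2 := by linarith
      obtain ⟨_, ⟨w, hw, rfl⟩, hlt⟩ := exists_lt_of_csInf_lt (hmne z) this
      exact ⟨w, hw, hlt.le⟩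
    · exact ⟨z, hrefl z, by linarith⟩
  choose next hnext1 hnext2 using hnext
  set u : ℕ → X := fun n => next^[n] x with hu
  have hustep : ∀ n, u (n + 1) = next (u n) := fun n =>
    Function.iterate_succ_apply' next n x
  have hrstep : ∀ n, r (u n) (u (n + 1)) := fun n => (hustep n) ▸ hnext1 (u n)
  have hrle : ∀ n p, n ≤ p → r (u n) (u p) := by
    intro n p hnp
    induction p with
    | zero => simp_all [Nat.le_zero.mp hnp, hrefl]
    | succ q ih =>
      rcases Nat.lt_or_ge n (q + 1) with h | h
      · exact htrans _ _ _ (ih (Nat.lt_succ_iff.mp h)) (hrstep q)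
      · have : n = q + 1 := le_antisymm hnp h
        rw [this]; exact hrefl _
  have hu0 : u 0 = x := rfl
  have hrx : ∀ n, r x (u n) := fun n => hu0 ▸ hrle 0 n (Nat.zero_le n)
  -- gap estimate
  have hgap : ∀ n, g (u n) - m (u n) ≤ g x / 2 ^ n := by
    intro n
    induction n with
    | zero => simpa [hu0] using hm0 x
    | succ q ih =>
      have h1 : g (u (q + 1)) ≤ (m (u q) + g (u q)) / 2 := (hustep q) ▸ hnext2 (u q)
      have h2 : m (u q) ≤ m (u (q + 1)) := hmmono _ _ (hrstep q)
      have : g (u (q + 1)) - m (u (q + 1)) ≤ (g (u q) - m (u q)) / 2 := by linarith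
      calc g (u (q + 1)) - m (u (q + 1)) ≤ (g (u q) - m (u q)) / 2 := this
        _ ≤ (g x / 2 ^ q) / 2 := by linarith
        _ = g x / 2 ^ (q + 1) := by ring
  -- Cauchy
  have hdistb : ∀ n p, n ≤ p → dist (u n) (u p) ≤ (ε⁻¹ * g x) * (1 / 2) ^ n := by
    intro n p hnp
    have h1 : ε * dist (u n) (u p) ≤ g (u n) - g (u p) := by
      have := hrle n p hnp; simp only [hr] at this; linarith
    have h2 : m (u n) ≤ g (u p) := csInf_le (hmbdd (u n)) ⟨u p, hrle n p hnp, rfl⟩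
    have h3 : ε * dist (u n) (u p) ≤ g x / 2 ^ n := by
      have := hgap n; linarith
    rw [← le_div_iff₀' hε] at h3
    calc dist (u n) (u p) ≤ (g x / 2 ^ n) / ε := h3
      _ = (ε⁻¹ * g x) * (1 / 2) ^ n := by
          field_simp
          rw [mul_assoc, ← mul_pow]; norm_num
  have hcauchy : CauchySeq u := by
    apply cauchySeq_of_le_geometric (1/2) (ε⁻¹ * g x) (by norm_num)
    intro n
    simpa using hdistb n (n + 1) (Nat.le_succ n)
  obtain ⟨y, hy⟩ := cauchySeq_tendsto_of_complete hcauchy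
  -- y is in the closed ball, hence in U
  have hyball : y ∈ Metric.closedBall x (ε⁻¹ * g x) := by
    have hclosed : IsClosed (Metric.closedBall x (ε⁻¹ * g x)) := Metric.isClosed_closedBall
    exact hclosed.mem_of_tendsto hy (Filter.Eventually.of_forall fun n => hrball _ (hrx n))
  have hyU : y ∈ U := hball hyball
  have hgcont : Filter.Tendsto (fun p => g (u p)) Filter.atTop (nhds (g y)) :=
    ((hg.continuousAt (hU.mem_nhds hyU)).tendsto.comp hy)
  -- r (u n) y for all n
  have hry : ∀ n, r (u n) y := by
    intro n
    have htend : Filter.Tendsto (fun p => g (u p) + ε * dist (u n) (u p))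
        Filter.atTop (nhds (g y + ε * dist (u n) y)) := by
      apply Filter.Tendsto.add hgcont
      exact (Filter.Tendsto.const_mul ε ((Continuous.dist continuous_const continuous_id).continuousAt.tendsto.comp hy))
    apply le_of_tendsto htend
    filter_upwards [Filter.eventually_ge_atTop n] with p hp
    exact hrle n p hp
  refine ⟨y, hyU, hu0 ▸ hry 0, ?_⟩
  intro z hz
  have hryz : ∀ n, r (u n) z := fun n => htrans _ _ _ (hry n) hz
  have hgzm : ∀ n, m (u n) ≤ g z := fun n => csInf_le (hmbdd (u n)) ⟨z, hryz n, rfl⟩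
  have hgy : ∀ n, g y ≤ g (u n) := by
    intro n
    have := hry n; simp only [hr] at this
    nlinarith [dist_nonneg (x := u n) (y := y)]
  have hyz : g y ≤ g z := by
    have key : ∀ n : ℕ, g y - g z ≤ g x / 2 ^ n := by
      intro n
      have := hgap n
      have := hgzm n
      have := hgy n
      linarith
    by_contra hcon
    push_neg at hcon
    obtain ⟨n, hn⟩ := pow_unbounded_of_one_lt (R := ℝ) (g x / (g y - g z)) (one_lt_two)
    have hpos : 0 < g y - g z := by linarith
    have := key n
    rw [le_div_iff₀ (by positivity : (0:ℝ) < 2 ^ n)] at this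
    rw [div_lt_iff₀ hpos] at hn
    nlinarith
  have : ε * dist y z ≤ 0 := by
    linarith [hz, hyz]
  have : dist y z ≤ 0 := by
    nlinarith
  have : dist y z = 0 := le_antisymm this dist_nonneg
  exact (dist_eq_zero.mp this).symm

theorem seminorm_pi_continuous {k : ℕ} (N : Seminorm ℝ (Fin k → ℝ)) :
    Continuous fun w => (N w : ℝ) := by
  set e : Fin k → (Fin k → ℝ) := fun i j => if i = j then 1 else 0 with he
  set C : ℝ := ∑ i, N (e i) with hC
  have hC0 : 0 ≤ C := Finset.sum_nonneg fun i _ => apply_nonneg N _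
  have hsum : ∀ (s : Finset (Fin k)) (h : Fin k → (Fin k → ℝ)),
      N (∑ i ∈ s, h i) ≤ ∑ i ∈ s, N (h i) := by
    intro s h
    induction s using Finset.cons_induction with
    | empty => simp
    | cons a s ha ih =>
      rw [Finset.sum_cons, Finset.sum_cons]
      exact (map_add_le_add N _ _).trans (by linarith)
  have hb : ∀ w, N w ≤ C * ‖w‖ := by
    intro w
    calc N w = N (∑ i, w i • e i) := by rw [← pi_eq_sum_univ w]
      _ ≤ ∑ i, N (w i • e i) := hsum _ _
      _ = ∑ i, ‖w i‖ * N (e i) := by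
          refine Finset.sum_congr rfl fun i _ => ?_
          exact map_smul_eq_mul N (w i) (e i)
      _ ≤ ∑ i, ‖w‖ * N (e i) := Finset.sum_le_sum fun i _ =>
          mul_le_mul_of_nonneg_right (norm_le_pi_norm w i) (apply_nonneg N _)
      _ = C * ‖w‖ := by rw [← Finset.mul_sum, mul_comm]
  have hlip : LipschitzWith (Real.toNNReal C) fun w => (N w : ℝ) := by
    apply LipschitzWith.of_dist_le_mul
    intro a b
    rw [Real.dist_eq, dist_eq_norm]
    calc |N a - N b| ≤ N (a - b) := by
          have := N.norm_sub_map_le_sub a b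
          simpa [Real.norm_eq_abs] using this
      _ ≤ C * ‖a - b‖ := hb _
      _ = (Real.toNNReal C) * ‖a - b‖ := by rw [Real.coe_toNNReal C hC0]
  exact hlip.continuous

theorem stmt_0 {X : Type*} [MetricSpace X] [CompleteSpace X] {k : ℕ}
    (N : Seminorm ℝ (Fin k → ℝ)) (hN : ∀ v : Fin k → ℝ, N v = 0 → v = 0)
    (U : Set X) (hU : IsOpen U) (ε : ℝ) (hε : 0 < ε)
    (f : X → (Fin k → ℝ)) (hf : ContinuousOn f U)
    (hdesc : ∀ x ∈ U, ∀ v : Fin k → ℝ, f x ≠ v →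
      ∃ y ∈ U, y ≠ x ∧ N (f y - v) - N (f x - v) ≤ -ε * dist x y) :
    ∀ x ∈ U, ∀ v : Fin k → ℝ,
      Metric.closedBall x (ε⁻¹ * N (f x - v)) ⊆ U →
      ∃ y ∈ U, f y = v ∧ ε * dist x y ≤ N (f x - v) := by
  intro x hx v hball
  -- N is continuous
  have hNcont : Continuous fun w : Fin k → ℝ => (N w : ℝ) := seminorm_pi_continuous N
  set g : X → ℝ := fun z => N (f z - v) with hg
  have hgcont : ContinuousOn g U := by
    apply hNcont.comp_continuousOn
    exact hf.sub continuousOn_const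
  obtain ⟨y, hyU, hle, hmax⟩ := ekeland_aux g (fun z => apply_nonneg N _) ε hε U hU hgcont x hx hball
  refine ⟨y, hyU, ?_, ?_⟩
  · by_contra hne
    obtain ⟨z, hzU, hzy, hzd⟩ := hdesc y hyU v hne
    have : g z + ε * dist y z ≤ g y := by
      simp only [hg] at *; linarith
    exact hzy (hmax z this)
  · have := apply_nonneg N (f y - v)
    simp only [hg] at hle this
    linarith
end

section
/- Let X be a metric space, U ⊆ X, ‖·‖ a norm on ℝ^k, and f, g : U → ℝ^k maps satisfying ‖(f(x) − f(y)) − (g(x) − g(y))‖ ≤ δ·d(x, y) for all x, y ∈ U, where 0 ≤ δ < ε. Suppose g satisfies the descent condition with constant ε: for every x ∈ U and every w ∈ ℝ^k with g(x) ≠ w there exists y ∈ U, y ≠ x, with ‖g(y) − w‖ − ‖g(x) − w‖ ≤ −ε·d(x, y). Then f satisfies the descent condition with constant ε − δ: for every x ∈ U and every v ∈ ℝ^k with f(x) ≠ v there exists y ∈ U, y ≠ x, with ‖f(y) − v‖ − ‖f(x) − v‖ ≤ −(ε − δ)·d(x, y). -/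
theorem stmt_1 {X : Type*} [MetricSpace X] {k : ℕ}
    (N : Seminorm ℝ (Fin k → ℝ)) (hN : ∀ v : Fin k → ℝ, N v = 0 → v = 0)
    (U : Set X) (f g : X → (Fin k → ℝ)) (δ ε : ℝ) (hδ0 : 0 ≤ δ) (hδε : δ < ε)
    (hfg : ∀ x ∈ U, ∀ y ∈ U, N ((f x - f y) - (g x - g y)) ≤ δ * dist x y)
    (hg : ∀ x ∈ U, ∀ w : Fin k → ℝ, g x ≠ w →
      ∃ y ∈ U, y ≠ x ∧ N (g y - w) - N (g x - w) ≤ -ε * dist x y) :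
    ∀ x ∈ U, ∀ v : Fin k → ℝ, f x ≠ v →
      ∃ y ∈ U, y ≠ x ∧ N (f y - v) - N (f x - v) ≤ -(ε - δ) * dist x y := by
  intro x hx v hv
  set w := v - (f x - g x) with hw
  have hgxw : g x ≠ w := by
    intro h
    apply hv
    have : g x = v - (f x - g x) := h
    have := congrArg (fun z => z + (f x - g x)) this
    simpa [sub_add_cancel] using this
  obtain ⟨y, hy, hyx, hle⟩ := hg x hx w hgxw
  refine ⟨y, hy, hyx, ?_⟩
  have h1 : N (f x - v) = N (g x - w) := by
    congr 1
    simp [hw]; abel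
  have h2 : N (f y - v) ≤ N (g y - w) + δ * dist x y := by
    have : f y - v = (g y - w) + ((f y - f x) - (g y - g x)) := by
      simp [hw]; abel
    rw [this]
    refine (map_add_le_add N _ _).trans ?_
    gcongr
    have := hfg y hy x hx
    simpa [dist_comm] using this
  have := hle
  linarith
end

section
/- Let X be a metric space, u, w : X → ℝ^k maps, μ ≥ 0, δ ≥ 0, L ≥ 0, and χ : X → [0, 1] an L-Lipschitz function. Suppose ‖u(x) − w(x)‖ ≤ μ for all x ∈ X, and ‖(u(x) − u(y)) − (w(x) − w(y))‖ ≤ δ·d(x, y) for all x, y ∈ X. Define z := (1 − χ)·u + χ·w. Then ‖(z(x) − z(y)) − (w(x) − w(y))‖ ≤ (δ + L·μ)·d(x, y) for all x, y ∈ X. -/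
theorem stmt_4 {X : Type*} [MetricSpace X] {k : ℕ}
    (N : Seminorm ℝ (Fin k → ℝ)) (hN : ∀ v : Fin k → ℝ, N v = 0 → v = 0)
    (u w : X → (Fin k → ℝ)) (μ δ L : ℝ) (hμ : 0 ≤ μ) (hδ : 0 ≤ δ) (hL : 0 ≤ L)
    (χ : X → ℝ) (hχ01 : ∀ x, χ x ∈ Set.Icc (0 : ℝ) 1)
    (hχL : ∀ x y, |χ x - χ y| ≤ L * dist x y)
    (hclose : ∀ x, N (u x - w x) ≤ μ)
    (hincr : ∀ x y, N ((u x - u y) - (w x - w y)) ≤ δ * dist x y) :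
    ∀ x y, N (((fun t => (1 - χ t) • u t + χ t • w t) x
          - (fun t => (1 - χ t) • u t + χ t • w t) y)
        - (w x - w y)) ≤ (δ + L * μ) * dist x y := by
  intro x y
  have key : ((1 - χ x) • u x + χ x • w x - ((1 - χ y) • u y + χ y • w y))
      - (w x - w y)
      = (1 - χ x) • ((u x - u y) - (w x - w y)) + (χ y - χ x) • (u y - w y) := by
    module
  simp only [key]
  calc N ((1 - χ x) • ((u x - u y) - (w x - w y)) + (χ y - χ x) • (u y - w y))
      ≤ N ((1 - χ x) • ((u x - u y) - (w x - w y))) + N ((χ y - χ x) • (u y - w y)) :=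
        map_add_le_add N _ _
    _ = |1 - χ x| * N ((u x - u y) - (w x - w y)) + |χ y - χ x| * N (u y - w y) := by
        rw [map_smul_eq_mul, map_smul_eq_mul]; simp [Real.norm_eq_abs]
    _ ≤ 1 * (δ * dist x y) + (L * dist x y) * μ := by
        rcases hχ01 x with ⟨h0, h1⟩
        have ha : |1 - χ x| ≤ 1 := by rw [abs_of_nonneg (by linarith)]; linarith
        have hb : |χ y - χ x| ≤ L * dist x y := by rw [abs_sub_comm]; exact hχL x y
        exact add_le_add
          (mul_le_mul ha (hincr x y) (apply_nonneg N _) zero_le_one)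
          (mul_le_mul hb (hclose y) (apply_nonneg N _)
            (mul_nonneg hL dist_nonneg))
    _ = (δ + L * μ) * dist x y := by ring
end

section
/- Let X be a metric space, F ⊆ X, c ∈ (0, 1], and x, y ∈ F. Suppose that for every pair of distinct points a, b ∈ F and every ε > 0 there exists z ∈ F with 0 < d(a, z) < ε and d(b, z) ≤ d(b, a) − c·d(a, z). Assume F is compact. Then for every ε > 0 there exists a finite chain x = p₀, p₁, …, p_N = y of points of F with d(p_{i−1}, p_i) ≤ ε for all i and Σ_{i=1}^{N} d(p_{i−1}, p_i) ≤ c⁻¹·d(x, y). -/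
theorem stmt_6 {X : Type*} [MetricSpace X]
    (F : Set X) (c : ℝ) (hc0 : 0 < c) (hc1 : c ≤ 1)
    (hF : IsCompact F) (x y : X) (hx : x ∈ F) (hy : y ∈ F)
    (hmove : ∀ a ∈ F, ∀ b ∈ F, a ≠ b → ∀ ε > 0,
      ∃ z ∈ F, 0 < dist a z ∧ dist a z < ε ∧ dist b z ≤ dist b a - c * dist a z) :
    ∀ ε > 0, ∃ (n : ℕ) (p : ℕ → X),
      p 0 = x ∧ p n = y ∧ (∀ i ≤ n, p i ∈ F) ∧
      (∀ i < n, dist (p i) (p (i + 1)) ≤ ε) ∧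
      (∑ i ∈ Finset.range n, dist (p i) (p (i + 1))) ≤ c⁻¹ * dist x y := by
  intro ε hε
  classical
  -- A "half-maximal step" choice: from any `a ∈ F` we can move to `z ∈ F` with
  -- step ≤ ε, making progress toward `y` at rate `c`, and (if `a ≠ y`)
  -- the step is at least half of the supremal possible such step.
  have key : ∀ a ∈ F, ∃ z, z ∈ F ∧ dist a z ≤ ε ∧
      dist y z ≤ dist y a - c * dist a z ∧
      (a ≠ y → ∀ z' ∈ F, dist a z' ≤ ε → dist y z' ≤ dist y a - c * dist a z' →
        dist a z' ≤ 2 * dist a z) := by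
    intro a ha
    by_cases hay : a = y
    · exact ⟨a, ha, by simpa using hε.le, by simp, fun h => absurd hay h⟩
    · set C : Set X := {z | z ∈ F ∧ dist a z ≤ ε ∧ dist y z ≤ dist y a - c * dist a z}
        with hC
      set D : Set ℝ := (fun z => dist a z) '' C with hD
      have haC : a ∈ C := ⟨ha, by simpa using hε.le, by simp⟩
      have hDne : D.Nonempty := ⟨dist a a, a, haC, rfl⟩
      have hDbdd : BddAbove D := by
        refine ⟨ε, ?_⟩
        rintro r ⟨z, hz, rfl⟩
        exact hz.2.1
      obtain ⟨z₀, hz₀F, hz₀pos, hz₀lt, hz₀y⟩ := hmove a ha y hy hay ε hε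
      have hz₀C : z₀ ∈ C := ⟨hz₀F, hz₀lt.le, hz₀y⟩
      have hz₀D : dist a z₀ ∈ D := ⟨z₀, hz₀C, rfl⟩
      have hspos : 0 < sSup D := lt_of_lt_of_le hz₀pos (le_csSup hDbdd hz₀D)
      obtain ⟨r, hrD, hrgt⟩ := exists_lt_of_lt_csSup hDne (half_lt_self hspos)
      obtain ⟨z, hzC, rfl⟩ := hrD
      refine ⟨z, hzC.1, hzC.2.1, hzC.2.2, fun _ z' hz'F hz'ε hz'y => ?_⟩
      have hz'D : dist a z' ∈ D := ⟨z', ⟨hz'F, hz'ε, hz'y⟩, rfl⟩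
      have := le_csSup hDbdd hz'D
      linarith
  -- The greedy step function and the greedy sequence.
  set f : X → X := fun a => if h : a ∈ F then (key a h).choose else y with hfdef
  have hf : ∀ a, a ∈ F → f a ∈ F ∧ dist a (f a) ≤ ε ∧
      dist y (f a) ≤ dist y a - c * dist a (f a) ∧
      (a ≠ y → ∀ z' ∈ F, dist a z' ≤ ε → dist y z' ≤ dist y a - c * dist a z' →
        dist a z' ≤ 2 * dist a (f a)) := by
    intro a ha
    simp only [hfdef, dif_pos ha]
    exact (key a ha).choose_spec
  set p : ℕ → X := fun n => f^[n] x with hpdef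
  have hp0 : p 0 = x := rfl
  have hpsucc : ∀ n, p (n + 1) = f (p n) := by
    intro n
    simp only [hpdef, Function.iterate_succ_apply']
  have hpF : ∀ n, p n ∈ F := by
    intro n
    induction n with
    | zero => exact hx
    | succ k ih => rw [hpsucc]; exact (hf _ ih).1
  have hstepε : ∀ n, dist (p n) (p (n + 1)) ≤ ε := by
    intro n
    rw [hpsucc]
    exact (hf _ (hpF n)).2.1
  have hprog : ∀ n, dist y (p (n + 1)) ≤ dist y (p n) - c * dist (p n) (p (n + 1)) := by
    intro n
    conv_lhs => rw [hpsucc]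
    conv_rhs => rw [hpsucc]
    exact (hf _ (hpF n)).2.2.1
  -- telescoping bound on the partial sums, between arbitrary indices
  have hIco : ∀ n m, n ≤ m →
      c * (∑ i ∈ Finset.Ico n m, dist (p i) (p (i + 1))) + dist y (p m) ≤ dist y (p n) := by
    intro n m hnm
    induction m, hnm using Nat.le_induction with
    | base => simp
    | succ k hk ih =>
      rw [Finset.sum_Ico_succ_top hk, mul_add]
      have := hprog k
      linarith
  have hsum : ∀ n,
      c * (∑ i ∈ Finset.range n, dist (p i) (p (i + 1))) + dist y (p n) ≤ dist y x := by
    intro n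
    have h := hIco 0 n (Nat.zero_le n)
    rw [hp0] at h
    rwa [Finset.range_eq_Ico]
  have hcinv : c⁻¹ * c = 1 := inv_mul_cancel₀ hc0.ne'
  have hcinv0 : (0 : ℝ) ≤ c⁻¹ := inv_nonneg.2 hc0.le
  -- summability of the steps
  have hsummable : Summable (fun n => dist (p n) (p (n + 1))) := by
    apply summable_of_sum_range_le (fun n => dist_nonneg)
    intro n
    have h1 := hsum n
    have h2 : dist y (p n) ≥ 0 := dist_nonneg
    have h3 : c * (∑ i ∈ Finset.range n, dist (p i) (p (i + 1))) ≤ dist y x := by linarith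
    have h4 := mul_le_mul_of_nonneg_left h3 hcinv0
    rw [← mul_assoc, hcinv, one_mul] at h4
    exact h4
  have hcauchy : CauchySeq p :=
    cauchySeq_of_dist_le_of_summable _ (fun n => le_refl _) hsummable
  obtain ⟨w, hwF, hwlim⟩ :=
    cauchySeq_tendsto_of_isComplete hF.isComplete (fun n => hpF n) hcauchy
  have hdw : Filter.Tendsto (fun n => dist (p n) w) Filter.atTop (nhds 0) := by
    simpa using hwlim.dist (tendsto_const_nhds (x := w))
  have hdyw : Filter.Tendsto (fun n => dist y (p n)) Filter.atTop (nhds (dist y w)) :=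
    (tendsto_const_nhds (x := y)).dist hwlim
  have hsteps0 : Filter.Tendsto (fun n => dist (p n) (p (n + 1))) Filter.atTop (nhds 0) :=
    hsummable.tendsto_atTop_zero
  -- limit inequality: c * dist (p n) w + dist y w ≤ dist y (p n)
  have hDn : ∀ n, c * dist (p n) w + dist y w ≤ dist y (p n) := by
    intro n
    have htend : Filter.Tendsto (fun m => c * dist (p n) (p m) + dist y (p m))
        Filter.atTop (nhds (c * dist (p n) w + dist y w)) := by
      exact (((tendsto_const_nhds (x := p n)).dist hwlim).const_mul c).add
        ((tendsto_const_nhds (x := y)).dist hwlim)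
    refine le_of_tendsto htend ?_
    filter_upwards [Filter.eventually_ge_atTop n] with m hm
    have h1 := hIco n m hm
    have h2 : dist (p n) (p m) ≤ ∑ i ∈ Finset.Ico n m, dist (p i) (p (i + 1)) :=
      dist_le_Ico_sum_dist _ hm
    nlinarith
  by_cases hyreach : ∃ n, p n = y
  ·
    obtain ⟨n, hn⟩ := hyreach
    refine ⟨n, p, hp0, hn, fun i _ => hpF i, fun i _ => hstepε i, ?_⟩
    have h1 := hsum n
    rw [hn] at h1
    simp only [dist_self] at h1
    have h4 := mul_le_mul_of_nonneg_left (by linarith : c *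
      (∑ i ∈ Finset.range n, dist (p i) (p (i + 1))) ≤ dist y x) hcinv0
    rw [← mul_assoc, hcinv, one_mul] at h4
    rwa [dist_comm x y]
  · push_neg at hyreach
    -- the limit w must be y
    have hwy : w = y := by
      by_contra hwy
      obtain ⟨z', hz'F, hz'pos, hz'lt, hz'y⟩ :=
        hmove w hwF y hy hwy (ε / 2) (half_pos hε)
      have E1 : ∀ᶠ n in Filter.atTop, dist (p n) w < min (ε / 2) (dist w z' / 2) :=
        hdw.eventually_lt_const (lt_min (half_pos hε) (half_pos hz'pos))
      have E2 : ∀ᶠ n in Filter.atTop, dist (p n) (p (n + 1)) < dist w z' / 4 :=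
        hsteps0.eventually_lt_const (by linarith)
      obtain ⟨n, h1, h2⟩ := (E1.and E2).exists
      have h1a : dist (p n) w < ε / 2 := lt_of_lt_of_le h1 (min_le_left _ _)
      have h1b : dist (p n) w < dist w z' / 2 := lt_of_lt_of_le h1 (min_le_right _ _)
      have htri : dist (p n) z' ≤ dist (p n) w + dist w z' := dist_triangle _ _ _
      have hcand1 : dist (p n) z' ≤ ε := by linarith
      have hcand2 : dist y z' ≤ dist y (p n) - c * dist (p n) z' := by
        have hD := hDn n
        nlinarith [mul_le_mul_of_nonneg_left htri hc0.le]
      have hmax := (hf _ (hpF n)).2.2.2 (hyreach n) z' hz'F hcand1 hcand2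
      rw [← hpsucc] at hmax
      have htri2 : dist w z' ≤ dist w (p n) + dist (p n) z' := dist_triangle _ _ _
      rw [dist_comm w (p n)] at htri2
      linarith
    -- choose n with dist y (p n) ≤ ε and finish with a final jump to y
    have hdy0 : Filter.Tendsto (fun n => dist y (p n)) Filter.atTop (nhds 0) := by
      rw [hwy] at hdyw
      simpa using hdyw
    obtain ⟨n, hnε⟩ := (hdy0.eventually_lt_const hε).exists
    refine ⟨n + 1, fun i => if i ≤ n then p i else y, by simp [hp0], by simp, ?_, ?_, ?_⟩
    · intro i _
      by_cases h : i ≤ n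
      · simp only [if_pos h]; exact hpF i
      · simp only [if_neg h]; exact hy
    · intro i hi
      have hi' : i ≤ n := Nat.lt_succ_iff.mp hi
      rcases lt_or_eq_of_le hi' with h | h
      · simp only [if_pos hi', if_pos (Nat.succ_le_of_lt h)]
        exact hstepε i
      · subst h
        simp only [if_pos (le_refl i), if_neg (Nat.not_succ_le_self i)]
        rw [dist_comm]
        exact hnε.le
    · rw [Finset.sum_range_succ]
      have hsum_eq : (∑ i ∈ Finset.range n,
          dist (if i ≤ n then p i else y) (if i + 1 ≤ n then p (i + 1) else y)) =
          ∑ i ∈ Finset.range n, dist (p i) (p (i + 1)) := by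
        refine Finset.sum_congr rfl fun i hi => ?_
        have hi' := Finset.mem_range.mp hi
        rw [if_pos hi'.le, if_pos (Nat.succ_le_of_lt hi')]
      rw [hsum_eq]
      simp only [if_pos (le_refl n), if_neg (Nat.not_succ_le_self n)]
      have h1 := hsum n
      have hdn : 0 ≤ dist y (p n) := dist_nonneg
      have h4 := mul_le_mul_of_nonneg_left h1 hcinv0
      rw [mul_add, ← mul_assoc, hcinv, one_mul] at h4
      have hc1' : 1 ≤ c⁻¹ := by
        rw [← hcinv]
        nlinarith
      have h5 : dist (p n) y ≤ c⁻¹ * dist y (p n) := by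
        rw [dist_comm (p n) y]
        nlinarith
      rw [dist_comm x y]
      linarith
end
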